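/- The natural homomorphism from the amalgamated free product SL₂(ℤ) *_{B(ℤ)} B(ℤ[t]) to E₂(ℤ[t]) — induced by the inclusions SL₂(ℤ) ↪ E₂(ℤ[t]) and B(ℤ[t]) ↪ E₂(ℤ[t]), with edge maps the inclusions B(ℤ) ↪ SL₂(ℤ) and B(ℤ) ↪ B(ℤ[t]) — is an isomorphism of groups. -/

import Mathlib

open Matrix MatrixGroups Polynomial LaurentPolynomial

namespace Paper

variable (R : Type) [CommRing R]

lemma entry00 (A B : SL(2, R)) : (↑(A * B) : Matrix (Fin 2) (Fin 2) R) 0 0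
    = A.1 0 0 * B.1 0 0 + A.1 0 1 * B.1 1 0 := by
  simp [Matrix.SpecialLinearGroup.coe_mul, Matrix.mul_apply, Fin.sum_univ_two]

lemma entry01 (A B : SL(2, R)) : (↑(A * B) : Matrix (Fin 2) (Fin 2) R) 0 1
    = A.1 0 0 * B.1 0 1 + A.1 0 1 * B.1 1 1 := by
  simp [Matrix.SpecialLinearGroup.coe_mul, Matrix.mul_apply, Fin.sum_univ_two]

lemma entry10 (A B : SL(2, R)) : (↑(A * B) : Matrix (Fin 2) (Fin 2) R) 1 0
    = A.1 1 0 * B.1 0 0 + A.1 1 1 * B.1 1 0 := by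
  simp [Matrix.SpecialLinearGroup.coe_mul, Matrix.mul_apply, Fin.sum_univ_two]

lemma entry11 (A B : SL(2, R)) : (↑(A * B) : Matrix (Fin 2) (Fin 2) R) 1 1
    = A.1 1 0 * B.1 0 1 + A.1 1 1 * B.1 1 1 := by
  simp [Matrix.SpecialLinearGroup.coe_mul, Matrix.mul_apply, Fin.sum_univ_two]

/-- The subgroup of upper triangular matrices in `SL₂(R)`. -/
def Bsub : Subgroup (Matrix.SpecialLinearGroup (Fin 2) R) where
  carrier := {A | A.1 1 0 = 0}
  one_mem' := by
    show ((1 : SL(2, R)) : Matrix (Fin 2) (Fin 2) R) 1 0 = 0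
    simp [Matrix.SpecialLinearGroup.coe_one, Matrix.one_apply]
  mul_mem' {A B} hA hB := by
    show (↑(A * B) : Matrix (Fin 2) (Fin 2) R) 1 0 = 0
    rw [entry10]
    simp only [Set.mem_setOf_eq] at hA hB
    rw [hA, hB]; ring
  inv_mem' {A} hA := by
    show (↑(A⁻¹) : Matrix (Fin 2) (Fin 2) R) 1 0 = 0
    rw [Matrix.SpecialLinearGroup.SL2_inv_expl A]
    simp only [Set.mem_setOf_eq] at hA
    simp [hA]

/-- The subgroup of matrices in `SL₂(R[t])` whose lower-left entry is divisible by `t`. -/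
def Psub : Subgroup (Matrix.SpecialLinearGroup (Fin 2) (Polynomial R)) where
  carrier := {A | (X : R[X]) ∣ A.1 1 0}
  one_mem' := by
    show (X : R[X]) ∣ ((1 : SL(2, R[X])) : Matrix (Fin 2) (Fin 2) R[X]) 1 0
    simp [Matrix.SpecialLinearGroup.coe_one, Matrix.one_apply]
  mul_mem' {A B} hA hB := by
    show (X : R[X]) ∣ (↑(A * B) : Matrix (Fin 2) (Fin 2) R[X]) 1 0
    rw [entry10]
    exact dvd_add (hA.mul_right _) (hB.mul_left _)
  inv_mem' {A} hA := by
    show (X : R[X]) ∣ (↑(A⁻¹) : Matrix (Fin 2) (Fin 2) R[X]) 1 0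
    rw [Matrix.SpecialLinearGroup.SL2_inv_expl A]
    simp only [Set.mem_setOf_eq] at hA
    simpa using hA.neg_right

/-- The elementary matrix `(1 r; 0 1)`. -/
def elUp (r : R) : SL(2, R) :=
  ⟨!![1, r; 0, 1], by simp [Matrix.det_fin_two_of]⟩

/-- The elementary matrix `(1 0; r 1)`. -/
def elLow (r : R) : SL(2, R) :=
  ⟨!![1, 0; r, 1], by simp [Matrix.det_fin_two_of]⟩

/-- The subgroup `E₂(R)` of `SL₂(R)` generated by the elementary matrices. -/
def Esub : Subgroup (Matrix.SpecialLinearGroup (Fin 2) R) :=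
  Subgroup.closure {A | (∃ r : R, A = elUp R r) ∨ (∃ r : R, A = elLow R r)}

variable {R}

lemma divX_X_mul (p : R[X]) : (X * p).divX = p := by
  ext n
  rw [Polynomial.coeff_divX, Polynomial.coeff_X_mul]

lemma X_mul_divX {p : R[X]} (h : (X : R[X]) ∣ p) : X * p.divX = p := by
  obtain ⟨c, rfl⟩ := h
  rw [divX_X_mul]

lemma X_mul_cancel {p q : R[X]} (h : X * p = X * q) : p = q := by
  ext n
  have := congrArg (fun r => Polynomial.coeff r (n + 1)) h
  simpa [Polynomial.coeff_X_mul] using this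

variable (R)

/-- The matrix underlying `conjP`. -/
noncomputable def conjMat (A : SL(2, R[X])) : Matrix (Fin 2) (Fin 2) R[X] :=
  !![A.1 0 0, X * A.1 0 1; (A.1 1 0).divX, A.1 1 1]

lemma conjMat_det {A : SL(2, R[X])} (hA : (X : R[X]) ∣ A.1 1 0) : (conjMat R A).det = 1 := by
  rw [conjMat, Matrix.det_fin_two_of]
  have h : X * (A.1 1 0).divX = A.1 1 0 := X_mul_divX hA
  have hd : A.1 0 0 * A.1 1 1 - A.1 0 1 * A.1 1 0 = 1 := by
    rw [← Matrix.det_fin_two]; exact A.2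
  calc A.1 0 0 * A.1 1 1 - X * A.1 0 1 * (A.1 1 0).divX
      = A.1 0 0 * A.1 1 1 - A.1 0 1 * (X * (A.1 1 0).divX) := by ring
    _ = 1 := by rw [h]; exact hd

lemma conjMat_mul {A B : SL(2, R[X])} (hA : (X : R[X]) ∣ A.1 1 0)
    (hB : (X : R[X]) ∣ B.1 1 0) :
    conjMat R (A * B) = conjMat R A * conjMat R B := by
  have h00 : A.1 0 0 * B.1 0 0 + A.1 0 1 * B.1 1 0
      = A.1 0 0 * B.1 0 0 + (X * A.1 0 1) * (B.1 1 0).divX := by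
    rw [show (X * A.1 0 1) * (B.1 1 0).divX = A.1 0 1 * (X * (B.1 1 0).divX) by ring,
      X_mul_divX hB]
  have h01 : X * (A.1 0 0 * B.1 0 1 + A.1 0 1 * B.1 1 1)
      = A.1 0 0 * (X * B.1 0 1) + (X * A.1 0 1) * B.1 1 1 := by ring
  have h10 : (A.1 1 0 * B.1 0 0 + A.1 1 1 * B.1 1 0).divX
      = (A.1 1 0).divX * B.1 0 0 + A.1 1 1 * (B.1 1 0).divX := by
    apply X_mul_cancel
    rw [X_mul_divX (dvd_add (hA.mul_right _) (hB.mul_left _))]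
    rw [mul_add,
      show X * ((A.1 1 0).divX * B.1 0 0) = (X * (A.1 1 0).divX) * B.1 0 0 by ring,
      X_mul_divX hA,
      show X * (A.1 1 1 * (B.1 1 0).divX) = A.1 1 1 * (X * (B.1 1 0).divX) by ring,
      X_mul_divX hB]
  have h11 : A.1 1 0 * B.1 0 1 + A.1 1 1 * B.1 1 1
      = (A.1 1 0).divX * (X * B.1 0 1) + A.1 1 1 * B.1 1 1 := by
    rw [show (A.1 1 0).divX * (X * B.1 0 1) = (X * (A.1 1 0).divX) * B.1 0 1 by ring,
      X_mul_divX hA]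
  rw [conjMat, conjMat, conjMat, entry00, entry01, entry10, entry11,
    Matrix.mul_fin_two, h10]
  rw [show (A.1 1 0 * B.1 0 1 + A.1 1 1 * B.1 1 1) = (A.1 1 0).divX * (X * B.1 0 1) + A.1 1 1 * B.1 1 1 from h11]
  rw [show (A.1 0 0 * B.1 0 0 + A.1 0 1 * B.1 1 0) = A.1 0 0 * B.1 0 0 + (X * A.1 0 1) * (B.1 1 0).divX from h00]
  rw [show X * (A.1 0 0 * B.1 0 1 + A.1 0 1 * B.1 1 1) = A.1 0 0 * (X * B.1 0 1) + (X * A.1 0 1) * B.1 1 1 from h01]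

/-- The second edge embedding `P → SL₂(R[t])`, conjugation by `diag(1,t)⁻¹` inside
`SL₂(R[t,t⁻¹])`: `(a, b; t·c, d) ↦ (a, t·b; c, d)`. -/
noncomputable def conjP : ↥(Psub R) →* SL(2, R[X]) where
  toFun A := ⟨conjMat R A.1, conjMat_det R A.2⟩
  map_one' := by
    apply Subtype.ext
    show conjMat R 1 = 1
    rw [conjMat]
    have h00 : ((1 : SL(2, R[X])) : Matrix (Fin 2) (Fin 2) R[X]) 0 0 = 1 := by
      rw [Matrix.SpecialLinearGroup.coe_one]; simp [Matrix.one_apply]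
    have h01 : ((1 : SL(2, R[X])) : Matrix (Fin 2) (Fin 2) R[X]) 0 1 = 0 := by
      rw [Matrix.SpecialLinearGroup.coe_one]; simp [Matrix.one_apply]
    have h10 : ((1 : SL(2, R[X])) : Matrix (Fin 2) (Fin 2) R[X]) 1 0 = 0 := by
      rw [Matrix.SpecialLinearGroup.coe_one]; simp [Matrix.one_apply]
    have h11 : ((1 : SL(2, R[X])) : Matrix (Fin 2) (Fin 2) R[X]) 1 1 = 1 := by
      rw [Matrix.SpecialLinearGroup.coe_one]; simp [Matrix.one_apply]
    rw [h00, h01, h10, h11, mul_zero, Polynomial.divX_zero, ← Matrix.one_fin_two]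
  map_mul' A B := by
    apply Subtype.ext
    show conjMat R (A.1 * B.1) = conjMat R A.1 * conjMat R B.1
    exact conjMat_mul R A.2 B.2

/-- The diagonal matrix `diag(1, t)` as a unit of the ring of 2×2 matrices over `R[t,t⁻¹]`. -/
noncomputable def DT : (Matrix (Fin 2) (Fin 2) (LaurentPolynomial R))ˣ where
  val := Matrix.diagonal ![1, LaurentPolynomial.T 1]
  inv := Matrix.diagonal ![1, LaurentPolynomial.T (-1)]
  val_inv := by
    rw [Matrix.diagonal_mul_diagonal]
    have : (fun i => (![1, LaurentPolynomial.T 1] : Fin 2 → LaurentPolynomial R) i *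
        ![1, LaurentPolynomial.T (-1)] i) = fun _ => (1 : LaurentPolynomial R) := by
      funext i
      fin_cases i
      · simp
      · show LaurentPolynomial.T 1 * LaurentPolynomial.T (-1) = 1
        rw [← LaurentPolynomial.T_add]; simp
    rw [this, Matrix.diagonal_one]
  inv_val := by
    rw [Matrix.diagonal_mul_diagonal]
    have : (fun i => (![1, LaurentPolynomial.T (-1)] : Fin 2 → LaurentPolynomial R) i *
        ![1, LaurentPolynomial.T 1] i) = fun _ => (1 : LaurentPolynomial R) := by
      funext i
      fin_cases i
      · simp
      · show LaurentPolynomial.T (-1) * LaurentPolynomial.T 1 = 1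
        rw [← LaurentPolynomial.T_add]; simp
    rw [this, Matrix.diagonal_one]

lemma DT_conj_det (M : Matrix (Fin 2) (Fin 2) (LaurentPolynomial R)) :
    (((DT R) : Matrix (Fin 2) (Fin 2) (LaurentPolynomial R)) * M * ((DT R)⁻¹).val).det = M.det := by
  rw [Matrix.det_mul, Matrix.det_mul]
  have h : ((DT R) : Matrix (Fin 2) (Fin 2) (LaurentPolynomial R)).det *
      ((DT R)⁻¹ : (Matrix (Fin 2) (Fin 2) (LaurentPolynomial R))ˣ).1.det = 1 := by
    rw [← Matrix.det_mul, Units.mul_inv, Matrix.det_one]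
  calc ((DT R) : Matrix (Fin 2) (Fin 2) (LaurentPolynomial R)).det * M.det * (((DT R)⁻¹).val).det
      = ((DT R) : Matrix (Fin 2) (Fin 2) (LaurentPolynomial R)).det * (((DT R)⁻¹).val).det * M.det := by ring
    _ = M.det := by rw [h, one_mul]

/-- The homomorphism `i₂ : SL₂(R[t]) → SL₂(R[t,t⁻¹])`, `A ↦ diag(1,t)·A·diag(1,t⁻¹)`. -/
noncomputable def i₂SL : SL(2, Polynomial R) →* SL(2, LaurentPolynomial R) where
  toFun A := ⟨(DT R : Matrix (Fin 2) (Fin 2) (LaurentPolynomial R)) *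
      A.1.map Polynomial.toLaurent * ↑(DT R)⁻¹, by
    rw [DT_conj_det]
    have : (A.1.map (Polynomial.toLaurent : R[X] → LaurentPolynomial R)).det
        = Polynomial.toLaurent A.1.det := by
      rw [← RingHom.mapMatrix_apply, ← RingHom.map_det]
    rw [this, A.2, _root_.map_one]⟩
  map_one' := by
    apply Subtype.ext
    show (DT R : Matrix (Fin 2) (Fin 2) (LaurentPolynomial R)) *
      ((1 : SL(2, R[X])).1.map Polynomial.toLaurent) * ((DT R)⁻¹).val = 1
    rw [Matrix.SpecialLinearGroup.coe_one]
    rw [show ((1 : Matrix (Fin 2) (Fin 2) R[X]).map (Polynomial.toLaurent : R[X] → _)) = 1 from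
      Matrix.map_one _ (map_zero _) (map_one _)]
    rw [mul_one, Units.mul_inv]
  map_mul' A B := by
    apply Subtype.ext
    show (DT R : Matrix (Fin 2) (Fin 2) (LaurentPolynomial R)) *
        ((A * B).1.map Polynomial.toLaurent) * ((DT R)⁻¹).val = _
    rw [Matrix.SpecialLinearGroup.coe_mul]
    rw [show ((A.1 * B.1).map (Polynomial.toLaurent : R[X] → _))
        = A.1.map Polynomial.toLaurent * B.1.map Polynomial.toLaurent from
      Matrix.map_mul]
    show _ = ((DT R : Matrix (Fin 2) (Fin 2) (LaurentPolynomial R)) *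
        A.1.map Polynomial.toLaurent * ((DT R)⁻¹).val) *
      ((DT R : Matrix (Fin 2) (Fin 2) (LaurentPolynomial R)) *
        B.1.map Polynomial.toLaurent * ((DT R)⁻¹).val)
    simp only [mul_assoc, Units.inv_mul_cancel_left]

end Paper
namespace Paper

variable (R : Type) [CommRing R]

def wSL : SL(2, R) := ⟨!![0, 1; -1, 0], by simp [Matrix.det_fin_two_of]⟩

/-- `-1` in `SL₂`. -/
def negI : SL(2, R) := ⟨-1, by simp [Matrix.det_fin_two]⟩

variable {R}

lemma elUp_mul (r s : R) : elUp R r * elUp R s = elUp R (r + s) := by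
  apply Subtype.ext
  show (elUp R r).1 * (elUp R s).1 = _
  simp [elUp, Matrix.mul_fin_two]
  ring_nf

lemma elUp_mem (r : R) : elUp R r ∈ Esub R := Subgroup.subset_closure (Or.inl ⟨r, rfl⟩)
lemma elLow_mem (r : R) : elLow R r ∈ Esub R := Subgroup.subset_closure (Or.inr ⟨r, rfl⟩)

lemma w_eq : elUp R 1 * elLow R (-1) * elUp R 1 = wSL R := by
  apply Subtype.ext
  show (elUp R 1).1 * (elLow R (-1)).1 * (elUp R 1).1 = _
  simp [elUp, elLow, wSL, Matrix.mul_fin_two]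

lemma negI_eq : wSL R * wSL R = negI R := by
  apply Subtype.ext
  show (!![0, 1; -1, 0] : Matrix (Fin 2) (Fin 2) R) * !![0, 1; -1, 0] = (-1 : Matrix (Fin 2) (Fin 2) R)
  rw [Matrix.mul_fin_two]
  ext i j
  fin_cases i <;> fin_cases j <;> simp [Matrix.one_apply]

lemma wSL_mem : wSL R ∈ Esub R := by
  rw [← w_eq]
  exact Subgroup.mul_mem _ (Subgroup.mul_mem _ (elUp_mem 1) (elLow_mem (-1))) (elUp_mem 1)

lemma negI_mem : (negI R : SL(2,R)) ∈ Esub R := by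
  rw [← negI_eq]; exact Subgroup.mul_mem _ wSL_mem wSL_mem

end Paper
namespace Paper

lemma natAbs_emod_lt {a c : ℤ} (h : c ≠ 0) : (a % c).natAbs < c.natAbs := by
  have h1 : 0 ≤ a % c := Int.emod_nonneg a h
  have h2 : a % |c| < |c| := Int.emod_lt_of_pos a (abs_pos.mpr h)
  rw [Int.emod_abs] at h2
  have : |c| = c.natAbs := Int.abs_eq_natAbs c
  omega

/-- `SL₂(ℤ)` is generated by the elementary matrices. -/
theorem SL2Z_mem_Esub (A : SL(2, ℤ)) : A ∈ Esub ℤ := by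
  suffices H : ∀ n : ℕ, ∀ A : SL(2, ℤ), (A.1 1 0).natAbs = n → A ∈ Esub ℤ from H _ A rfl
  intro n
  induction n using Nat.strong_induction_on with
  | _ n ih =>
    intro A
    induction A using Matrix.SpecialLinearGroup.fin_two_induction with
    | _ a b c d hdet =>
      intro hc
      have hc' : c.natAbs = n := by simpa using hc
      by_cases h0 : c = 0
      · subst h0
        have had : a * d = 1 := by linarith [hdet]
        rcases Int.mul_eq_one_iff_eq_one_or_neg_one.mp had with ⟨ha, hd⟩ | ⟨ha, hd⟩
        · subst ha; subst hd
          have : (⟨!![1, b; 0, 1], by rwa [Matrix.det_fin_two_of]⟩ : SL(2, ℤ)) = elUp ℤ b :=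
            Subtype.ext rfl
          rw [this]
          exact elUp_mem b
        · subst ha; subst hd
          have : (⟨!![-1, b; 0, -1], by rwa [Matrix.det_fin_two_of]⟩ : SL(2, ℤ))
              = negI ℤ * elUp ℤ (-b) := by
            apply Subtype.ext
            show !![(-1 : ℤ), b; 0, -1] = (negI ℤ).1 * (elUp ℤ (-b)).1
            show !![(-1 : ℤ), b; 0, -1] = (-1 : Matrix (Fin 2) (Fin 2) ℤ) * !![1, -b; 0, 1]
            rw [neg_one_mul]
            ext i j
            fin_cases i <;> fin_cases j <;> simp
          rw [this]
          exact Subgroup.mul_mem _ negI_mem (elUp_mem (-b))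
      · -- inductive step
        set A' : SL(2, ℤ) := ⟨!![a, b; c, d], by rwa [Matrix.det_fin_two_of]⟩ with hA'
        set N : SL(2, ℤ) := wSL ℤ * elUp ℤ (-(a / c)) with hN
        have hNcoe : (N : Matrix (Fin 2) (Fin 2) ℤ) = !![0, 1; -1, a / c] := by
          show (!![0, 1; -1, 0] : Matrix (Fin 2) (Fin 2) ℤ) * !![1, -(a / c); 0, 1] = _
          rw [Matrix.mul_fin_two]
          norm_num
        have hentry : ((N * A').1) 1 0 = -(a % c) := by
          rw [entry10, hNcoe]
          have e1 : (!![(0 : ℤ), 1; -1, a / c]) 1 0 = -1 := by simp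
          have e2 : (!![(0 : ℤ), 1; -1, a / c]) 1 1 = a / c := by simp
          have e3 : (A'.1) 0 0 = a := by simp [hA']
          have e4 : (A'.1) 1 0 = c := by simp [hA']
          rw [e1, e2, e3, e4, Int.emod_def]
          ring
        have hlt : (((N * A').1) 1 0).natAbs < n := by
          rw [hentry]
          rw [Int.natAbs_neg]
          rw [← hc']
          exact natAbs_emod_lt h0
        have hNA : N * A' ∈ Esub ℤ := ih _ hlt (N * A') rfl
        have hNmem : N ∈ Esub ℤ := Subgroup.mul_mem _ wSL_mem (elUp_mem _)
        have heq : A' = N⁻¹ * (N * A') := by group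
        rw [heq]
        exact Subgroup.mul_mem _ (Subgroup.inv_mem _ hNmem) hNA

end Paper
namespace Paper

variable {R S : Type} [CommRing R] [CommRing S]

lemma map_coe (f : R →+* S) (A : SL(2, R)) :
    ((Matrix.SpecialLinearGroup.map f A) : Matrix (Fin 2) (Fin 2) S) = A.1.map f := rfl

lemma map_entry (f : R →+* S) (A : SL(2, R)) (i j : Fin 2) :
    (Matrix.SpecialLinearGroup.map f A).1 i j = f (A.1 i j) := by
  rw [map_coe, Matrix.map_apply]

lemma map_elUp (f : R →+* S) (r : R) :
    Matrix.SpecialLinearGroup.map f (elUp R r) = elUp S (f r) := by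
  apply Subtype.ext
  rw [map_coe]
  show (!![1, r; 0, 1] : Matrix (Fin 2) (Fin 2) R).map f = !![1, f r; 0, 1]
  ext i j
  fin_cases i <;> fin_cases j <;> simp [Matrix.map_apply]

lemma map_elLow (f : R →+* S) (r : R) :
    Matrix.SpecialLinearGroup.map f (elLow R r) = elLow S (f r) := by
  apply Subtype.ext
  rw [map_coe]
  show (!![1, 0; r, 1] : Matrix (Fin 2) (Fin 2) R).map f = !![1, 0; f r, 1]
  ext i j
  fin_cases i <;> fin_cases j <;> simp [Matrix.map_apply]

lemma map_Esub_le (f : R →+* S) :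
    (Esub R).map (Matrix.SpecialLinearGroup.map f) ≤ Esub S := by
  rw [Esub, MonoidHom.map_closure]
  rw [Subgroup.closure_le]
  rintro _ ⟨A, hA, rfl⟩
  rcases hA with ⟨r, rfl⟩ | ⟨r, rfl⟩
  · rw [map_elUp]; exact elUp_mem _
  · rw [map_elLow]; exact elLow_mem _

lemma elUp_zero : elUp R 0 = 1 := by
  apply Subtype.ext
  show !![1, (0 : R); 0, 1] = 1
  rw [← Matrix.one_fin_two]

/-- The upper triangular subgroup of `SL₂(ℤ[t])` is contained in `E₂(ℤ[t])`. -/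
lemma Bsub_polyZ_le_Esub : Bsub (Polynomial ℤ) ≤ Esub (Polynomial ℤ) := by
  intro A hA
  have h10 : A.1 1 0 = 0 := hA
  have hdet : A.1 0 0 * A.1 1 1 = 1 := by
    have h := A.2
    rw [Matrix.det_fin_two, h10, mul_zero, sub_zero] at h
    exact h
  obtain ⟨u, hu1, hu2⟩ := Polynomial.isUnit_iff.mp (IsUnit.of_mul_eq_one _ hdet)
  rcases Int.isUnit_iff.mp hu1 with h1 | h1
  · -- a = 1
    have h00 : A.1 0 0 = 1 := by rw [← hu2, h1]; simp
    have h11 : A.1 1 1 = 1 := by rw [h00, one_mul] at hdet; exact hdet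
    have : A = elUp (Polynomial ℤ) (A.1 0 1) := by
      apply Subtype.ext
      show A.1 = !![1, A.1 0 1; 0, 1]
      conv_lhs => rw [Matrix.eta_fin_two A.1]
      rw [h00, h10, h11]
    rw [this]
    exact elUp_mem _
  · -- a = -1
    have h00 : A.1 0 0 = -1 := by rw [← hu2, h1]; simp
    have h11 : A.1 1 1 = -1 := by
      have := hdet
      rw [h00] at this
      linear_combination -this
    have : A = negI (Polynomial ℤ) * elUp (Polynomial ℤ) (-(A.1 0 1)) := by
      apply Subtype.ext
      show A.1 = (-1 : Matrix (Fin 2) (Fin 2) (Polynomial ℤ)) * !![1, -(A.1 0 1); 0, 1]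
      rw [neg_one_mul]
      conv_lhs => rw [Matrix.eta_fin_two A.1]
      rw [h00, h10, h11]
      ext i j
      fin_cases i <;> fin_cases j <;> simp
    rw [this]
    exact Subgroup.mul_mem _ negI_mem (elUp_mem _)

/-- The inclusion `SL₂(ℤ) ↪ E₂(ℤ[t])` induced by constant polynomials. -/
noncomputable def SLZtoE : SL(2, ℤ) →* ↥(Esub (Polynomial ℤ)) :=
  (Matrix.SpecialLinearGroup.map (Polynomial.C : ℤ →+* Polynomial ℤ)).codRestrict
    (Esub (Polynomial ℤ))
    (fun A => map_Esub_le _ ⟨A, SL2Z_mem_Esub A, rfl⟩)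

/-- The inclusion `B(ℤ) ↪ B(ℤ[t])` induced by constant polynomials. -/
noncomputable def BZtoBZX : ↥(Bsub ℤ) →* ↥(Bsub (Polynomial ℤ)) :=
  ((Matrix.SpecialLinearGroup.map (Polynomial.C : ℤ →+* Polynomial ℤ)).comp
      (Bsub ℤ).subtype).codRestrict (Bsub (Polynomial ℤ))
    (fun A => by
      show (Matrix.SpecialLinearGroup.map (Polynomial.C : ℤ →+* Polynomial ℤ) A.1).1 1 0 = 0
      rw [map_entry]
      have h : A.1.1 1 0 = 0 := A.2
      rw [h, map_zero])

/-- The inclusion `B(ℤ[t]) ↪ E₂(ℤ[t])`. -/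
noncomputable def BZXtoE : ↥(Bsub (Polynomial ℤ)) →* ↥(Esub (Polynomial ℤ)) :=
  Subgroup.inclusion Bsub_polyZ_le_Esub

end Paper

namespace Paper

/-- The two vertex groups `SL₂(ℤ)` and `B(ℤ[t])`. -/
noncomputable def fam910 : Bool → Type
  | true => SL(2, ℤ)
  | false => ↥(Bsub (Polynomial ℤ))

noncomputable instance (b : Bool) : Group (fam910 b) := by
  cases b <;> (dsimp [fam910]; infer_instance)

/-- The edge embeddings of `B(ℤ)` into the two vertex groups. -/
noncomputable def edges910 : (b : Bool) → ↥(Bsub ℤ) →* fam910 b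
  | true => (Bsub ℤ).subtype
  | false => BZtoBZX

/-- The inclusions of the two vertex groups into `E₂(ℤ[t])`. -/
noncomputable def legs910 : (b : Bool) → fam910 b →* ↥(Esub (Polynomial ℤ))
  | true => SLZtoE
  | false => BZXtoE

lemma compat910 : ∀ b, (legs910 b).comp (edges910 b) = SLZtoE.comp (Bsub ℤ).subtype := by
  intro b
  cases b
  · exact MonoidHom.ext fun A => Subtype.ext rfl
  · rfl

end Paper

namespace Paper

/-! ### Auxiliary lemmas for the amalgam theorem -/

lemma wb_le_zero {a : WithBot ℕ} (h : ¬ (1 ≤ a)) : a ≤ 0 := by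
  cases a with
  | bot => exact bot_le
  | coe n =>
    rw [← WithBot.coe_one, WithBot.coe_le_coe] at h
    rw [← WithBot.coe_zero, WithBot.coe_le_coe]
    omega

lemma wb_lt_add {a b : WithBot ℕ} (hb : b ≠ ⊥) (ha : 1 ≤ a) : b < a + b := by
  cases a with
  | bot => simp at ha
  | coe n =>
    cases b with
    | bot => simp at hb
    | coe m =>
      rw [← WithBot.coe_one, WithBot.coe_le_coe] at ha
      rw [← WithBot.coe_add, WithBot.coe_lt_coe]
      omega

lemma wb_add_le {a b c : WithBot ℕ} (ha : a ≤ 0) (h : b ≤ c) : a + b ≤ c := by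
  calc a + b ≤ 0 + c := add_le_add ha h
    _ = c := zero_add c

lemma wb_one_le_add {a b : WithBot ℕ} (ha : 1 ≤ a) (hb : 0 ≤ b) : 1 ≤ a + b := by
  calc (1 : WithBot ℕ) = 1 + 0 := by simp
    _ ≤ a + b := add_le_add ha hb

/-- Ping-pong state after a letter from `SL₂(ℤ) \ B(ℤ)` (a constant matrix with
nonzero lower-left entry). -/
def StS (M : SL(2, Polynomial ℤ)) : Prop :=
  M.1 1 0 ≠ 0 ∧ (M.1 0 0).degree ≤ (M.1 1 0).degree ∧
    ((M.1 1 1 ≠ 0 ∧ (M.1 0 1).degree ≤ (M.1 1 1).degree) ∨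
      (M.1 1 1 = 0 ∧ (M.1 0 1).degree ≤ 0))

/-- Ping-pong state after a letter from `B(ℤ[t])` with nonconstant upper-right entry. -/
def StU (M : SL(2, Polynomial ℤ)) : Prop :=
  (M.1 1 0).degree < (M.1 0 0).degree ∧ (M.1 1 1).degree < (M.1 0 1).degree ∧
    (1 ≤ (M.1 0 0).degree ∨ 1 ≤ (M.1 0 1).degree)

/-- The state, indexed by the summand of the leading letter. -/
def Inv : Bool → SL(2, Polynomial ℤ) → Prop
  | true => StS
  | false => StU

lemma detSL (M : SL(2, Polynomial ℤ)) :
    M.1 0 0 * M.1 1 1 - M.1 0 1 * M.1 1 0 = 1 := by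
  have h := M.2; rwa [Matrix.det_fin_two] at h

lemma baseS (S : SL(2, Polynomial ℤ))
    (ha : (S.1 0 0).degree ≤ 0) (hb : (S.1 0 1).degree ≤ 0)
    (hc : (S.1 1 0).degree = 0) (hd : (S.1 1 1).degree ≤ 0) : StS S := by
  have hc0 : S.1 1 0 ≠ 0 := by
    intro h; rw [h, Polynomial.degree_zero] at hc; exact absurd hc (by decide)
  refine ⟨hc0, by rw [hc]; exact ha, ?_⟩
  by_cases hd0 : S.1 1 1 = 0
  · exact Or.inr ⟨hd0, hb⟩
  · exact Or.inl ⟨hd0, le_trans hb (Polynomial.zero_le_degree_iff.mpr hd0)⟩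

lemma baseU (U : SL(2, Polynomial ℤ)) (h0 : U.1 1 0 = 0)
    (ha : (U.1 0 0).degree = 0) (hd : (U.1 1 1).degree = 0)
    (hb : 1 ≤ (U.1 0 1).degree) : StU U := by
  refine ⟨?_, ?_, Or.inr hb⟩
  · rw [h0, Polynomial.degree_zero, ha]; exact (by decide : (⊥ : WithBot ℕ) < 0)
  · rw [hd]; exact lt_of_lt_of_le (by decide : (0 : WithBot ℕ) < 1) hb

lemma transU (U M : SL(2, Polynomial ℤ)) (h0 : U.1 1 0 = 0)
    (ha : (U.1 0 0).degree = 0) (hd : (U.1 1 1).degree = 0)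
    (hb : 1 ≤ (U.1 0 1).degree) (hM : StS M) : StU (U * M) := by
  obtain ⟨hc0, hac, hbd⟩ := hM
  have hUa0 : U.1 0 0 ≠ 0 := by
    intro h; rw [h, Polynomial.degree_zero] at ha; exact absurd ha (by decide)
  have e00 := entry00 (Polynomial ℤ) U M
  have e01 := entry01 (Polynomial ℤ) U M
  have e10 := entry10 (Polynomial ℤ) U M
  have e11 := entry11 (Polynomial ℤ) U M
  rw [h0, zero_mul, zero_add] at e10 e11
  have dM10 : (M.1 1 0).degree ≠ ⊥ := by rwa [ne_eq, Polynomial.degree_eq_bot]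
  have hN10 : ((U * M).1 1 0).degree = (M.1 1 0).degree := by
    rw [e10, Polynomial.degree_mul, hd, zero_add]
  have key1 : (M.1 1 0).degree < (U.1 0 1 * M.1 1 0).degree := by
    rw [Polynomial.degree_mul]; exact wb_lt_add dM10 hb
  have key0 : (U.1 0 0 * M.1 0 0).degree < (U.1 0 1 * M.1 1 0).degree := by
    rw [Polynomial.degree_mul, ha, zero_add]
    exact lt_of_le_of_lt hac key1
  have hN00 : ((U * M).1 0 0).degree = (U.1 0 1 * M.1 1 0).degree := by
    rw [e00]; exact Polynomial.degree_add_eq_right_of_degree_lt key0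
  refine ⟨?_, ?_, Or.inl ?_⟩
  · rw [hN10, hN00]; exact key1
  · rcases hbd with ⟨hd0, hbdle⟩ | ⟨hd0, hble⟩
    · have dM11 : (M.1 1 1).degree ≠ ⊥ := by rwa [ne_eq, Polynomial.degree_eq_bot]
      have k1 : (M.1 1 1).degree < (U.1 0 1 * M.1 1 1).degree := by
        rw [Polynomial.degree_mul]; exact wb_lt_add dM11 hb
      have k0 : (U.1 0 0 * M.1 0 1).degree < (U.1 0 1 * M.1 1 1).degree := by
        rw [Polynomial.degree_mul, ha, zero_add]
        exact lt_of_le_of_lt hbdle k1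
      have hN01 : ((U * M).1 0 1).degree = (U.1 0 1 * M.1 1 1).degree := by
        rw [e01]; exact Polynomial.degree_add_eq_right_of_degree_lt k0
      have hN11 : ((U * M).1 1 1).degree = (M.1 1 1).degree := by
        rw [e11, Polynomial.degree_mul, hd, zero_add]
      rw [hN11, hN01]; exact k1
    · have hM01 : M.1 0 1 ≠ 0 := by
        intro h
        have hdet := detSL M
        rw [hd0, h, mul_zero, zero_mul, sub_zero] at hdet
        exact absurd hdet (by simp)
      have hN11 : (U * M).1 1 1 = 0 := by rw [e11, hd0, mul_zero]
      have hN01 : (U * M).1 0 1 = U.1 0 0 * M.1 0 1 := by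
        rw [e01, hd0, mul_zero, add_zero]
      rw [hN11, hN01, Polynomial.degree_zero]
      exact bot_lt_iff_ne_bot.mpr (by
        rw [ne_eq, Polynomial.degree_eq_bot]
        exact mul_ne_zero hUa0 hM01)
  · rw [hN00, Polynomial.degree_mul]
    exact wb_one_le_add hb (Polynomial.zero_le_degree_iff.mpr hc0)

lemma transS (S M : SL(2, Polynomial ℤ))
    (ha : (S.1 0 0).degree ≤ 0) (hb : (S.1 0 1).degree ≤ 0)
    (hc : (S.1 1 0).degree = 0) (hd : (S.1 1 1).degree ≤ 0)
    (hM : StU M) : StS (S * M) := by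
  obtain ⟨h1, h2, _⟩ := hM
  have hM00 : M.1 0 0 ≠ 0 := by
    intro h; rw [h, Polynomial.degree_zero] at h1; exact not_lt_bot h1
  have hM01 : M.1 0 1 ≠ 0 := by
    intro h; rw [h, Polynomial.degree_zero] at h2; exact not_lt_bot h2
  have e00 := entry00 (Polynomial ℤ) S M
  have e01 := entry01 (Polynomial ℤ) S M
  have e10 := entry10 (Polynomial ℤ) S M
  have e11 := entry11 (Polynomial ℤ) S M
  have k10 : (S.1 1 1 * M.1 1 0).degree < (S.1 1 0 * M.1 0 0).degree := by
    rw [Polynomial.degree_mul (p := S.1 1 0), hc, zero_add]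
    calc (S.1 1 1 * M.1 1 0).degree ≤ (S.1 1 1).degree + (M.1 1 0).degree :=
          Polynomial.degree_mul_le _ _
      _ ≤ (M.1 1 0).degree := wb_add_le hd le_rfl
      _ < (M.1 0 0).degree := h1
  have hN10 : ((S * M).1 1 0).degree = (M.1 0 0).degree := by
    rw [e10, Polynomial.degree_add_eq_left_of_degree_lt k10, Polynomial.degree_mul, hc, zero_add]
  have hN10ne : (S * M).1 1 0 ≠ 0 := by
    intro h; rw [h, Polynomial.degree_zero] at hN10
    exact hM00 (Polynomial.degree_eq_bot.mp hN10.symm)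
  have k11 : (S.1 1 1 * M.1 1 1).degree < (S.1 1 0 * M.1 0 1).degree := by
    rw [Polynomial.degree_mul (p := S.1 1 0), hc, zero_add]
    calc (S.1 1 1 * M.1 1 1).degree ≤ (S.1 1 1).degree + (M.1 1 1).degree :=
          Polynomial.degree_mul_le _ _
      _ ≤ (M.1 1 1).degree := wb_add_le hd le_rfl
      _ < (M.1 0 1).degree := h2
  have hN11 : ((S * M).1 1 1).degree = (M.1 0 1).degree := by
    rw [e11, Polynomial.degree_add_eq_left_of_degree_lt k11, Polynomial.degree_mul, hc, zero_add]
  have hN11ne : (S * M).1 1 1 ≠ 0 := by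
    intro h; rw [h, Polynomial.degree_zero] at hN11
    exact hM01 (Polynomial.degree_eq_bot.mp hN11.symm)
  refine ⟨hN10ne, ?_, Or.inl ⟨hN11ne, ?_⟩⟩
  · rw [hN10, e00]
    refine le_trans (Polynomial.degree_add_le _ _) (max_le ?_ ?_)
    · exact le_trans (Polynomial.degree_mul_le _ _) (wb_add_le ha le_rfl)
    · exact le_trans (Polynomial.degree_mul_le _ _) (wb_add_le hb (le_of_lt h1))
  · rw [hN11, e01]
    refine le_trans (Polynomial.degree_add_le _ _) (max_le ?_ ?_)
    · exact le_trans (Polynomial.degree_mul_le _ _) (wb_add_le ha le_rfl)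
    · exact le_trans (Polynomial.degree_mul_le _ _) (wb_add_le hb (le_of_lt h2))

/-! ### Facts about the letters -/

lemma letterS_facts (m : SL(2, ℤ)) (hm : m ∉ ((Bsub ℤ).subtype).range) :
    ((Matrix.SpecialLinearGroup.map (Polynomial.C : ℤ →+* Polynomial ℤ) m).1 0 0).degree ≤ 0 ∧
    ((Matrix.SpecialLinearGroup.map (Polynomial.C : ℤ →+* Polynomial ℤ) m).1 0 1).degree ≤ 0 ∧
    ((Matrix.SpecialLinearGroup.map (Polynomial.C : ℤ →+* Polynomial ℤ) m).1 1 0).degree = 0 ∧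
    ((Matrix.SpecialLinearGroup.map (Polynomial.C : ℤ →+* Polynomial ℤ) m).1 1 1).degree ≤ 0 := by
  rw [Subgroup.range_subtype] at hm
  have hc : m.1 1 0 ≠ 0 := fun h => hm h
  refine ⟨?_, ?_, ?_, ?_⟩ <;> rw [map_entry]
  · exact Polynomial.degree_C_le
  · exact Polynomial.degree_C_le
  · exact Polynomial.degree_C hc
  · exact Polynomial.degree_C_le

lemma letterU_facts (m : ↥(Bsub (Polynomial ℤ))) (hm : m ∉ BZtoBZX.range) :
    m.1.1 1 0 = 0 ∧ (m.1.1 0 0).degree = 0 ∧ (m.1.1 1 1).degree = 0 ∧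
      1 ≤ (m.1.1 0 1).degree := by
  have h0 : m.1.1 1 0 = 0 := m.2
  have had : m.1.1 0 0 * m.1.1 1 1 = 1 := by
    have h := detSL m.1
    rwa [h0, mul_zero, sub_zero] at h
  obtain ⟨r, hr, hCr⟩ := Polynomial.isUnit_iff.mp (IsUnit.of_mul_eq_one _ had)
  obtain ⟨s, hs, hCs⟩ := Polynomial.isUnit_iff.mp
    (IsUnit.of_mul_eq_one _ (by rwa [mul_comm] at had))
  have dega : (m.1.1 0 0).degree = 0 := by rw [← hCr]; exact Polynomial.degree_C hr.ne_zero
  have degd : (m.1.1 1 1).degree = 0 := by rw [← hCs]; exact Polynomial.degree_C hs.ne_zero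
  refine ⟨h0, dega, degd, ?_⟩
  by_contra hdeg
  have hble : (m.1.1 0 1).degree ≤ 0 := wb_le_zero hdeg
  have hCb : m.1.1 0 1 = Polynomial.C ((m.1.1 0 1).coeff 0) :=
    Polynomial.eq_C_of_degree_le_zero hble
  have hrs : r * s = 1 := by
    apply Polynomial.C_injective
    rw [_root_.map_mul, _root_.map_one, hCr, hCs, had]
  have hdet : (!![r, (m.1.1 0 1).coeff 0; 0, s] : Matrix (Fin 2) (Fin 2) ℤ).det = 1 := by
    rw [Matrix.det_fin_two_of]
    simpa using hrs
  set A : SL(2, ℤ) := ⟨!![r, (m.1.1 0 1).coeff 0; 0, s], hdet⟩ with hA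
  have hAmem : A ∈ Bsub ℤ := by
    show A.1 1 0 = 0
    simp [hA]
  apply hm
  refine ⟨⟨A, hAmem⟩, ?_⟩
  apply Subtype.ext
  apply Subtype.ext
  show (Matrix.SpecialLinearGroup.map (Polynomial.C : ℤ →+* Polynomial ℤ) A :
    Matrix (Fin 2) (Fin 2) (Polynomial ℤ)) = m.1.1
  rw [map_coe]
  refine Matrix.ext fun i j => ?_
  fin_cases i <;> fin_cases j
  · simpa [Matrix.map_apply, hA] using hCr
  · simpa [Matrix.map_apply, hA] using hCb.symm
  · simpa [Matrix.map_apply, hA] using h0.symm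
  · simpa [Matrix.map_apply, hA] using hCs

/-! ### Injectivity of the diagram maps -/

lemma mapC_SL_injective :
    Function.Injective
      (Matrix.SpecialLinearGroup.map (n := Fin 2) (Polynomial.C : ℤ →+* Polynomial ℤ)) := by
  intro A B h
  apply Subtype.ext
  refine Matrix.ext fun i j => ?_
  apply Polynomial.C_injective
  rw [← map_entry (Polynomial.C : ℤ →+* Polynomial ℤ) A i j,
    ← map_entry (Polynomial.C : ℤ →+* Polynomial ℤ) B i j, h]

lemma SLZtoE_injective : Function.Injective SLZtoE := by
  intro x y h
  exact mapC_SL_injective (congrArg Subtype.val h)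

lemma BZtoBZX_injective : Function.Injective BZtoBZX := by
  intro x y h
  have h' : Matrix.SpecialLinearGroup.map (Polynomial.C : ℤ →+* Polynomial ℤ) x.1 =
      Matrix.SpecialLinearGroup.map (Polynomial.C : ℤ →+* Polynomial ℤ) y.1 :=
    congrArg Subtype.val h
  exact Subtype.ext (mapC_SL_injective h')

lemma edges910_injective : ∀ b, Function.Injective (edges910 b) := by
  intro b
  cases b
  · exact BZtoBZX_injective
  · exact Subgroup.subtype_injective _

/-! ### The key ping-pong lemma -/

open Monoid.PushoutI Monoid.CoprodI in
lemma key910 : ∀ (W : Monoid.CoprodI.Word fam910),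
    (∀ l ∈ W.toList, Sigma.snd l ∉ (edges910 l.1).range) →
    ∀ i : Bool, W.fstIdx = some i →
    Inv i ((Monoid.PushoutI.lift legs910 (SLZtoE.comp (Bsub ℤ).subtype) compat910
      (Monoid.PushoutI.ofCoprodI W.prod) : SL(2, Polynomial ℤ))) := by
  intro W
  induction W using Monoid.CoprodI.Word.consRecOn with
  | empty => intro _ i hi; simp [Word.fstIdx, Word.empty] at hi
  | cons j m w hmw hm1 ih =>
    intro hred i hi
    rw [Word.fstIdx_cons] at hi
    have hij : i = j := by
      injection hi with hi'; exact hi'.symm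
    subst hij
    have hmnot : m ∉ (edges910 i).range :=
      hred ⟨i, m⟩ List.mem_cons_self
    have hredtail : ∀ l ∈ w.toList, Sigma.snd l ∉ (edges910 l.1).range :=
      fun l hl => hred l (List.mem_cons_of_mem _ hl)
    have hsplit : (Monoid.PushoutI.lift legs910 (SLZtoE.comp (Bsub ℤ).subtype) compat910
          (Monoid.PushoutI.ofCoprodI (Word.cons m w hmw hm1).prod) : SL(2, Polynomial ℤ)) =
        ((legs910 i m : ↥(Esub (Polynomial ℤ))) : SL(2, Polynomial ℤ)) *
        ((Monoid.PushoutI.lift legs910 (SLZtoE.comp (Bsub ℤ).subtype) compat910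
          (Monoid.PushoutI.ofCoprodI w.prod) : ↥(Esub (Polynomial ℤ))) : SL(2, Polynomial ℤ)) := by
      rw [Word.prod_cons, _root_.map_mul, _root_.map_mul, Monoid.PushoutI.ofCoprodI_of,
        Monoid.PushoutI.lift_of]
      rfl
    rw [hsplit]
    cases hlist : w.toList with
    | nil =>
      have hwprod : w.prod = 1 := by
        rw [Word.prod, hlist]; simp
      rw [hwprod, _root_.map_one, _root_.map_one]
      have hone : ((1 : ↥(Esub (Polynomial ℤ))) : SL(2, Polynomial ℤ)) = 1 := rfl
      rw [hone, mul_one]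
      cases i with
      | false =>
        obtain ⟨h0, ha, hd, hb⟩ := letterU_facts m hmnot
        exact baseU _ h0 ha hd hb
      | true =>
        obtain ⟨ha, hb, hc, hd⟩ := letterS_facts m hmnot
        exact baseS _ ha hb hc hd
    | cons l rest =>
      have hfstw : w.fstIdx = some l.1 := by
        rw [Word.fstIdx, hlist]; rfl
      have hlne : l.1 ≠ i := by
        intro h
        apply hmw
        rw [hfstw, h]
      have hInv := ih hredtail l.1 hfstw
      cases i with
      | false =>
        have hl1 : l.1 = true := by
          cases hb : l.1
          · exact absurd hb hlne
          · rfl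
        rw [hl1] at hInv
        obtain ⟨h0, ha, hd, hb⟩ := letterU_facts m hmnot
        exact transU _ _ h0 ha hd hb hInv
      | true =>
        have hl1 : l.1 = false := by
          cases hb : l.1
          · rfl
          · exact absurd hb hlne
        rw [hl1] at hInv
        obtain ⟨ha, hb, hc, hd⟩ := letterS_facts m hmnot
        exact transS _ _ ha hb hc hd hInv

/-! ### Surjectivity ingredients -/

lemma elLow_eq_conj (R : Type) [CommRing R] (r : R) :
    elLow R r = wSL R * elUp R (-r) * (wSL R)⁻¹ := by
  rw [eq_comm, mul_inv_eq_iff_eq_mul]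
  apply Subtype.ext
  show (wSL R).1 * (elUp R (-r)).1 = (elLow R r).1 * (wSL R).1
  simp [wSL, elUp, elLow, Matrix.mul_fin_two]

lemma mapC_wSL : Matrix.SpecialLinearGroup.map (Polynomial.C : ℤ →+* Polynomial ℤ) (wSL ℤ) =
    wSL (Polynomial ℤ) := by
  apply Subtype.ext
  rw [map_coe]
  show (!![0, 1; -1, 0] : Matrix (Fin 2) (Fin 2) ℤ).map Polynomial.C = !![0, 1; -1, 0]
  ext i j
  fin_cases i <;> fin_cases j <;> simp [Matrix.map_apply]

lemma elUp_mem_Bsub (p : Polynomial ℤ) : elUp (Polynomial ℤ) p ∈ Bsub (Polynomial ℤ) := by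
  show (elUp (Polynomial ℤ) p).1 1 0 = 0
  simp [elUp]

end Paper

namespace Paper

lemma L910_injective :
    Function.Injective
      (Monoid.PushoutI.lift legs910 (SLZtoE.comp (Bsub ℤ).subtype) compat910) := by
  classical
  rw [injective_iff_map_eq_one]
  intro g hg
  obtain ⟨d⟩ := Monoid.PushoutI.NormalWord.transversal_nonempty edges910 edges910_injective
  letI : MulAction (Monoid.PushoutI edges910) (Monoid.PushoutI.NormalWord d) :=
    @Monoid.PushoutI.NormalWord.mulAction Bool fam910 _ _ _ edges910 d instDecidableEqBool
      (fun i => Classical.decEq _)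
  have hgw : g = (g • (Monoid.PushoutI.NormalWord.empty :
      Monoid.PushoutI.NormalWord d)).prod := by
    rw [@Monoid.PushoutI.NormalWord.prod_smul Bool fam910 _ _ _ edges910 d instDecidableEqBool
        (fun i => Classical.decEq _), Monoid.PushoutI.NormalWord.prod_empty, mul_one]
  generalize hwdef : g • (Monoid.PushoutI.NormalWord.empty :
      Monoid.PushoutI.NormalWord d) = w at hgw
  have hprod : w.prod = Monoid.PushoutI.base edges910 w.head *
      Monoid.PushoutI.ofCoprodI w.toWord.prod := rfl
  have hred : ∀ l ∈ w.toWord.toList, Sigma.snd l ∉ (edges910 l.1).range := by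
    intro l hl hlr
    have hset : l.2 ∈ d.set l.1 := w.normalized l.1 l.2 (by rw [Sigma.eta]; exact hl)
    have hne1 : l.2 ≠ 1 := w.toWord.ne_one l hl
    have hc := d.compl l.1
    have heq : ((⟨⟨l.2, hlr⟩, ⟨1, d.one_mem l.1⟩⟩ :
        ((edges910 l.1).range : Set (fam910 l.1)) × (d.set l.1))) =
        ⟨⟨1, Subgroup.one_mem _⟩, ⟨l.2, hset⟩⟩ := by
      apply hc.1
      simp
    have : l.2 = 1 := congrArg (fun p => (p.1 : fam910 l.1)) heq
    exact hne1 this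
  cases hlist : w.toWord.toList with
  | nil =>
    have hwprod : w.toWord.prod = 1 := by
      simp only [Monoid.CoprodI.Word.prod, hlist, List.map_nil, List.prod_nil]
    have hgb : g = Monoid.PushoutI.base edges910 w.head := by
      rw [hgw, hprod, hwprod, _root_.map_one, mul_one]
    rw [hgb, Monoid.PushoutI.lift_base] at hg
    have hh : SLZtoE (w.head).1 = 1 := hg
    have hval : (w.head).1 = 1 := by
      apply SLZtoE_injective
      rw [hh, _root_.map_one]
    have hone : w.head = 1 := Subtype.ext hval
    rw [hgb, hone, _root_.map_one]
  | cons l rest =>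
    exfalso
    have hfstw : w.toWord.fstIdx = some l.1 := by
      simp [Monoid.CoprodI.Word.fstIdx, hlist]
    have hkey := key910 w.toWord hred l.1 hfstw
    have hab : Monoid.PushoutI.lift legs910 (SLZtoE.comp (Bsub ℤ).subtype) compat910
          (Monoid.PushoutI.base edges910 w.head) *
        Monoid.PushoutI.lift legs910 (SLZtoE.comp (Bsub ℤ).subtype) compat910
          (Monoid.PushoutI.ofCoprodI w.toWord.prod) = 1 := by
      rw [← _root_.map_mul, ← hprod, ← hgw]
      exact hg
    have hM : Monoid.PushoutI.lift legs910 (SLZtoE.comp (Bsub ℤ).subtype) compat910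
          (Monoid.PushoutI.ofCoprodI w.toWord.prod) =
        (Monoid.PushoutI.lift legs910 (SLZtoE.comp (Bsub ℤ).subtype) compat910
          (Monoid.PushoutI.base edges910 w.head))⁻¹ :=
      eq_inv_of_mul_eq_one_right hab
    have hbaseval : ((Monoid.PushoutI.lift legs910 (SLZtoE.comp (Bsub ℤ).subtype) compat910
          (Monoid.PushoutI.base edges910 w.head)) : SL(2, Polynomial ℤ)) =
        Matrix.SpecialLinearGroup.map (n := Fin 2) (Polynomial.C : ℤ →+* Polynomial ℤ) w.head.1 := by
      rw [Monoid.PushoutI.lift_base]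
      rfl
    have hMval : ((Monoid.PushoutI.lift legs910 (SLZtoE.comp (Bsub ℤ).subtype) compat910
          (Monoid.PushoutI.ofCoprodI w.toWord.prod)) : SL(2, Polynomial ℤ)) =
        Matrix.SpecialLinearGroup.map (n := Fin 2) (Polynomial.C : ℤ →+* Polynomial ℤ) (w.head.1)⁻¹ := by
      rw [hM]
      calc ((Monoid.PushoutI.lift legs910 (SLZtoE.comp (Bsub ℤ).subtype) compat910
            (Monoid.PushoutI.base edges910 w.head))⁻¹ : ↥(Esub (Polynomial ℤ))).1
          = (((Monoid.PushoutI.lift legs910 (SLZtoE.comp (Bsub ℤ).subtype) compat910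
            (Monoid.PushoutI.base edges910 w.head)) : SL(2, Polynomial ℤ)))⁻¹ := rfl
        _ = (Matrix.SpecialLinearGroup.map (n := Fin 2) (Polynomial.C : ℤ →+* Polynomial ℤ) w.head.1)⁻¹ := by
            rw [hbaseval]
        _ = Matrix.SpecialLinearGroup.map (n := Fin 2) (Polynomial.C : ℤ →+* Polynomial ℤ) (w.head.1)⁻¹ :=
            (_root_.map_inv _ _).symm
    rw [hMval] at hkey
    have hA10 : ((w.head.1)⁻¹ : SL(2, ℤ)).1 1 0 = 0 := (Bsub ℤ).inv_mem w.head.2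
    cases hb : l.1
    case false =>
      rw [hb] at hkey
      have hkey' : StU (Matrix.SpecialLinearGroup.map (n := Fin 2) (Polynomial.C : ℤ →+* Polynomial ℤ)
          (w.head.1)⁻¹) := hkey
      rcases hkey'.2.2 with h | h <;> rw [map_entry] at h <;>
        exact absurd (le_trans h Polynomial.degree_C_le) (by decide)
    case true =>
      rw [hb] at hkey
      have hkey' : StS (Matrix.SpecialLinearGroup.map (n := Fin 2) (Polynomial.C : ℤ →+* Polynomial ℤ)
          (w.head.1)⁻¹) := hkey
      apply hkey'.1
      rw [map_entry, hA10, map_zero]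

lemma L910_surjective :
    Function.Surjective
      (Monoid.PushoutI.lift legs910 (SLZtoE.comp (Bsub ℤ).subtype) compat910) := by
  intro y
  have hUp : ∀ p : Polynomial ℤ, elUp (Polynomial ℤ) p ∈
      Subgroup.map (Esub (Polynomial ℤ)).subtype
        (Monoid.PushoutI.lift legs910 (SLZtoE.comp (Bsub ℤ).subtype) compat910).range := by
    intro p
    refine Subgroup.mem_map.mpr
      ⟨Monoid.PushoutI.lift legs910 (SLZtoE.comp (Bsub ℤ).subtype) compat910
        (Monoid.PushoutI.of (φ := edges910) false ⟨elUp (Polynomial ℤ) p, elUp_mem_Bsub p⟩),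
        MonoidHom.mem_range.mpr ⟨_, rfl⟩, ?_⟩
    refine (congrArg (Esub (Polynomial ℤ)).subtype (Monoid.PushoutI.lift_of legs910 (SLZtoE.comp (Bsub ℤ).subtype) compat910 (i := false) _)).trans ?_
    rfl
  have hwT : wSL (Polynomial ℤ) ∈
      Subgroup.map (Esub (Polynomial ℤ)).subtype
        (Monoid.PushoutI.lift legs910 (SLZtoE.comp (Bsub ℤ).subtype) compat910).range := by
    refine Subgroup.mem_map.mpr
      ⟨Monoid.PushoutI.lift legs910 (SLZtoE.comp (Bsub ℤ).subtype) compat910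
        (Monoid.PushoutI.of (φ := edges910) true (wSL ℤ)),
        MonoidHom.mem_range.mpr ⟨_, rfl⟩, ?_⟩
    refine (congrArg (Esub (Polynomial ℤ)).subtype (Monoid.PushoutI.lift_of legs910 (SLZtoE.comp (Bsub ℤ).subtype) compat910 (i := true) _)).trans ?_
    exact mapC_wSL
  have hT : Esub (Polynomial ℤ) ≤
      Subgroup.map (Esub (Polynomial ℤ)).subtype
        (Monoid.PushoutI.lift legs910 (SLZtoE.comp (Bsub ℤ).subtype) compat910).range := by
    refine (Subgroup.closure_le _).mpr ?_
    rintro Amat (⟨p, rfl⟩ | ⟨p, rfl⟩)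
    · exact hUp p
    · rw [elLow_eq_conj]
      exact Subgroup.mul_mem _ (Subgroup.mul_mem _ hwT (hUp (-p))) (Subgroup.inv_mem _ hwT)
  obtain ⟨x, hxrange, hxval⟩ := Subgroup.mem_map.mp (hT y.2)
  obtain ⟨g, hgx⟩ := MonoidHom.mem_range.mp hxrange
  refine ⟨g, ?_⟩
  apply Subtype.ext
  rw [hgx]
  exact hxval

end Paper

open Paper in
/-- The natural homomorphism `SL₂(ℤ) *_{B(ℤ)} B(ℤ[t]) → E₂(ℤ[t])`, induced by the inclusions,
is an isomorphism of groups. -/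
theorem amalgam_E2_SL2Zt :
    Function.Bijective
      (Monoid.PushoutI.lift legs910 (SLZtoE.comp (Bsub ℤ).subtype) compat910) :=
  ⟨Paper.L910_injective, Paper.L910_surjective⟩
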